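/- For every ε ∈ (0, π) there exist constants C, δ > 0, depending only on ε, such that |E(s, y)| = |exp(−y s) − exp(−y √(λ + s²))| ≤ C √|λ| · y · e^{−δ s y} for all λ ∈ Σ_ε and all real s, y ≥ 0. -/

import Mathlib

open MeasureTheory Real

/-- Principal complex square root `√z = z^(1/2)` (principal branch of `cpow`). -/
noncomputable def csqrt (z : ℂ) : ℂ := z ^ (1/2 : ℂ)

/-- The sector `Σ_ε = {λ ∈ ℂ : λ ≠ 0, |Arg λ| < π − ε}`. -/
def SigmaSector (ε : ℝ) : Set ℂ := {l : ℂ | l ≠ 0 ∧ |l.arg| < Real.pi - ε}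

/-- Mikhlin condition (M) with constant `cbar`, with `K = ⌊(d+1)/2⌋`. -/
def CondM (d : ℕ) (m : EuclideanSpace ℝ (Fin (d-1)) → ℂ) (cbar : ℝ) : Prop :=
  ContDiffOn ℝ ((d+1)/2 : ℕ) m {ξ : EuclideanSpace ℝ (Fin (d-1)) | ξ ≠ 0} ∧
  ∀ k : ℕ, k ≤ (d+1)/2 → ∀ ξ : EuclideanSpace ℝ (Fin (d-1)), ξ ≠ 0 →
    ‖ξ‖ ^ k * ‖iteratedFDerivWithin ℝ k m
        {ξ : EuclideanSpace ℝ (Fin (d-1)) | ξ ≠ 0} ξ‖ ≤ cbar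

/-- Parameterized Mikhlin condition (M*) with constants `(cbar, δ)`, `K = ⌊(d+1)/2⌋`. -/
def CondMStar (d : ℕ) (m : EuclideanSpace ℝ (Fin (d-1)) → ℝ → ℂ) (cbar δ : ℝ) : Prop :=
  (∀ y : ℝ, 0 ≤ y →
    ContDiffOn ℝ ((d+1)/2 : ℕ) (fun ξ => m ξ y)
      {ξ : EuclideanSpace ℝ (Fin (d-1)) | ξ ≠ 0}) ∧
  ∀ k : ℕ, k ≤ (d+1)/2 →
    ∀ ξ : EuclideanSpace ℝ (Fin (d-1)), ξ ≠ 0 → ∀ y : ℝ, 0 ≤ y →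
      ‖ξ‖ ^ k * ‖iteratedFDerivWithin ℝ k (fun ξ => m ξ y)
          {ξ : EuclideanSpace ℝ (Fin (d-1)) | ξ ≠ 0} ξ‖ ≤
        cbar * Real.exp (-δ * ‖ξ‖ * y) / (1 + y)

/-- The fundamental multiplier `m₀(s, y)`. -/
noncomputable def m0 (l : ℂ) (α : ℝ) (s y : ℝ) : ℂ :=
  ((csqrt (l + (s:ℂ)^2) + s) / ((α:ℂ) + l + csqrt (l + (s:ℂ)^2) + s)) *
    ((Complex.exp (-(y:ℂ) * csqrt (l + (s:ℂ)^2)) - Complex.exp (-(y:ℂ) * s)) / l)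

/-- `E(s, y) = e^{-ys} - e^{-y√(λ+s²)}`. -/
noncomputable def Efun (l : ℂ) (s y : ℝ) : ℂ :=
  Complex.exp (-(y:ℂ) * s) - Complex.exp (-(y:ℂ) * csqrt (l + (s:ℂ)^2))


/-- MVT bound for the complex exponential. -/
lemma exp_diff_bound (a b : ℂ) :
    ‖Complex.exp a - Complex.exp b‖ ≤
      ‖a - b‖ * max (Real.exp a.re) (Real.exp b.re) := by
  have h := Convex.norm_image_sub_le_of_norm_hasDerivWithin_le
    (f := Complex.exp) (f' := Complex.exp) (s := segment ℝ b a)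
    (C := max (Real.exp a.re) (Real.exp b.re))
    (fun x _ => (Complex.hasDerivAt_exp x).hasDerivWithinAt)
    (fun x hx => by
      obtain ⟨t1, t2, ht1, ht2, hsum, rfl⟩ := hx
      have hre : (t1 • b + t2 • a).re = t1 * b.re + t2 * a.re := by
        simp [Complex.add_re, Complex.smul_re]
      have hle : (t1 • b + t2 • a).re ≤ max a.re b.re := by
        rw [hre]
        calc t1 * b.re + t2 * a.re ≤ t1 * max a.re b.re + t2 * max a.re b.re := by
              gcongr
              · exact le_max_right _ _
              · exact le_max_left _ _
          _ = max a.re b.re := by rw [← add_mul, hsum, one_mul]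
      calc ‖Complex.exp (t1 • b + t2 • a)‖ = Real.exp (t1 • b + t2 • a).re := by
              rw [Complex.norm_exp]
        _ ≤ Real.exp (max a.re b.re) := Real.exp_le_exp.2 hle
        _ = max (Real.exp a.re) (Real.exp b.re) := (Real.exp_monotone.map_max)
      )
    (convex_segment _ _) (left_mem_segment ℝ b a) (right_mem_segment ℝ b a)
  calc ‖Complex.exp a - Complex.exp b‖ ≤
      max (Real.exp a.re) (Real.exp b.re) * ‖a - b‖ := h
    _ = ‖a - b‖ * max (Real.exp a.re) (Real.exp b.re) := mul_comm _ _

lemma sector_re_gt {ε : ℝ} (hε0 : 0 < ε) (hεπ : ε < Real.pi) {l : ℂ} (hl : l ≠ 0)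
    (harg : |l.arg| < Real.pi - ε) : -Real.cos ε * ‖l‖ < l.re := by
  have habs : 0 < ‖l‖ := norm_pos_iff.mpr hl
  have h1 : Real.cos (Real.pi - ε) < Real.cos |l.arg| := by
    apply Real.strictAntiOn_cos ⟨abs_nonneg _, ?_⟩ ⟨by linarith [abs_nonneg l.arg], by linarith⟩ harg
    linarith
  rw [Real.cos_pi_sub, Real.cos_abs, Complex.cos_arg hl] at h1
  calc -Real.cos ε * ‖l‖ < l.re / ‖l‖ * ‖l‖ := by
        exact mul_lt_mul_of_pos_right h1 habs
    _ = l.re := by field_simp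

lemma sector_im_ge {ε : ℝ} (hε0 : 0 < ε) (hεπ : ε < Real.pi) {l : ℂ} (hl : l ≠ 0)
    (harg : |l.arg| < Real.pi - ε) (hre : l.re < 0) :
    Real.sin ε * ‖l‖ ≤ |l.im| ∧ ε < Real.pi / 2 := by
  have habs : 0 < ‖l‖ := norm_pos_iff.mpr hl
  have hargpi : |l.arg| ≤ Real.pi := abs_le.2 ⟨by linarith [Complex.neg_pi_lt_arg l], Complex.arg_le_pi l⟩
  -- |arg l| > π/2
  have h2 : Real.pi / 2 < |l.arg| := by
    by_contra h
    push_neg at h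
    have : 0 ≤ Real.cos l.arg := by
      apply Real.cos_nonneg_of_mem_Icc
      constructor
      · linarith [neg_abs_le l.arg]
      · linarith [le_abs_self l.arg]
    rw [Complex.cos_arg hl] at this
    have : 0 ≤ l.re := by
      by_contra h'
      push_neg at h'
      nlinarith [div_neg_of_neg_of_pos h' habs]
    linarith
  have hεhalf : ε < Real.pi / 2 := by linarith
  -- sin ε < sin |arg l|
  have h3 : Real.sin ε < Real.sin |l.arg| := by
    have key : Real.cos (Real.pi/2 - ε) < Real.cos (|l.arg| - Real.pi/2) := by
      apply Real.strictAntiOn_cos ⟨by linarith, by linarith⟩ ⟨by linarith, by linarith⟩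
      linarith
    rw [Real.cos_pi_div_two_sub] at key
    have : Real.cos (|l.arg| - Real.pi/2) = Real.sin |l.arg| := by
      rw [show |l.arg| - Real.pi/2 = -(Real.pi/2 - |l.arg|) by ring, Real.cos_neg,
        Real.cos_pi_div_two_sub]
    linarith [this ▸ key]
  have h4 : Real.sin |l.arg| ≤ |Real.sin l.arg| := by
    rcases abs_cases l.arg with ⟨h, _⟩ | ⟨h, _⟩
    · rw [h]; exact le_abs_self _
    · rw [h, Real.sin_neg]; exact neg_le_abs _
  have h5 : |Real.sin l.arg| = |l.im| / ‖l‖ := by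
    rw [Complex.sin_arg, abs_div, abs_of_pos habs]
  refine ⟨?_, hεhalf⟩
  have : Real.sin ε ≤ |l.im| / ‖l‖ := by
    rw [← h5]; linarith
  calc Real.sin ε * ‖l‖ ≤ |l.im| / ‖l‖ * ‖l‖ :=
        mul_le_mul_of_nonneg_right this habs.le
    _ = |l.im| := by field_simp

lemma sector_abs_facts {ε : ℝ} (hε0 : 0 < ε) (hεπ : ε < Real.pi) {l : ℂ} (hl : l ≠ 0)
    (harg : |l.arg| < Real.pi - ε) (t : ℝ) (ht : 0 ≤ t) :
    Real.sin ε * ‖l‖ ≤ ‖l + t‖ ∧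
    Real.sin ε * t ≤ ‖l + t‖ ∧
    -Real.cos ε * ‖l + t‖ ≤ (l + (t:ℂ)).re := by
  have habs : 0 < ‖l‖ := norm_pos_iff.mpr hl
  have hsin : 0 < Real.sin ε := Real.sin_pos_of_pos_of_lt_pi hε0 hεπ
  have hsin1 : Real.sin ε ≤ 1 := Real.sin_le_one ε
  have hzre : (l + (t:ℂ)).re = l.re + t := by simp
  have hzim : (l + (t:ℂ)).im = l.im := by simp
  have habsz : ‖l + t‖ ^ 2 = (l.re + t)^2 + l.im^2 := by
    rw [Complex.sq_norm, Complex.normSq_apply, hzre, hzim]; ring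
  have habsl : ‖l‖ ^ 2 = l.re^2 + l.im^2 := by
    rw [Complex.sq_norm, Complex.normSq_apply]; ring
  have hzpos : 0 ≤ ‖l + t‖ := norm_nonneg _
  refine ⟨?_, ?_, ?_⟩
  · -- sin ε * |l| ≤ |z|
    rcases le_or_gt 0 l.re with h | h
    · have hsq : (Real.sin ε * ‖l‖)^2 ≤ ‖l + t‖^2 := by
        have h1 : (Real.sin ε * ‖l‖)^2 ≤ ‖l‖ ^ 2 := by
          rw [mul_pow]
          have hs1 : Real.sin ε ^ 2 ≤ 1 := by nlinarith
          nlinarith [mul_nonneg (sub_nonneg.2 hs1) (sq_nonneg (‖l‖))]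
        rw [habsz]
        rw [habsl] at h1
        nlinarith [mul_nonneg h ht, sq_nonneg t]
      have := Real.sqrt_le_sqrt hsq
      rwa [Real.sqrt_sq (by positivity), Real.sqrt_sq hzpos] at this
    · obtain ⟨him, _⟩ := sector_im_ge hε0 hεπ hl harg h
      calc Real.sin ε * ‖l‖ ≤ |l.im| := him
        _ = |(l + (t:ℂ)).im| := by rw [hzim]
        _ ≤ ‖l + t‖ := Complex.abs_im_le_norm _
  · -- sin ε * t ≤ |z|
    rcases le_or_gt 0 l.re with h | h
    · calc Real.sin ε * t ≤ t := by nlinarith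
        _ ≤ l.re + t := by linarith
        _ = (l + (t:ℂ)).re := hzre.symm
        _ ≤ ‖l + t‖ := Complex.re_le_norm _
    · obtain ⟨him, hεhalf⟩ := sector_im_ge hε0 hεπ hl harg h
      have hcos : 0 < Real.cos ε := Real.cos_pos_of_mem_Ioo ⟨by linarith, hεhalf⟩
      have him2 : Real.sin ε ^ 2 * (l.re^2 + l.im^2) ≤ l.im^2 := by
        have : (Real.sin ε * ‖l‖)^2 ≤ |l.im|^2 := by
          apply sq_le_sq' _ him
          nlinarith [abs_nonneg l.im]
        rw [sq_abs, mul_pow, habsl] at this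
        linarith
      have hpyth : Real.sin ε ^ 2 + Real.cos ε ^ 2 = 1 := Real.sin_sq_add_cos_sq ε
      have hkey : Real.cos ε ^2 * l.im^2 ≥ Real.sin ε^2 * l.re^2 := by nlinarith
      have hs2 : Real.sin ε ^ 2 = 1 - Real.cos ε ^ 2 := by linarith
      have hkey' : (1 - Real.cos ε ^2) * l.re^2 ≤ Real.cos ε ^2 * l.im^2 := by
        rw [← hs2]; linarith
      have hsq : (Real.sin ε * t)^2 ≤ ‖l + t‖^2 := by
        rw [habsz, mul_pow, hs2]
        nlinarith [sq_nonneg (l.re + Real.cos ε^2 * t), mul_pos hcos hcos]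
      have := Real.sqrt_le_sqrt hsq
      rwa [Real.sqrt_sq (by positivity), Real.sqrt_sq hzpos] at this
  · -- -cos ε * |z| ≤ Re z
    have hre := sector_re_gt hε0 hεπ hl harg
    have htri1 : ‖l + t‖ ≤ ‖l‖ + t := by
      calc ‖l + t‖ ≤ ‖l‖ + ‖(t:ℂ)‖ := norm_add_le _ _
        _ = ‖l‖ + t := by rw [Complex.norm_real, Real.norm_eq_abs, abs_of_nonneg ht]
    have htri2 : ‖l‖ ≤ ‖l + t‖ + t := by
      calc ‖l‖ = ‖(l + t) + (-(t:ℂ))‖ := by congr 1; ring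
        _ ≤ ‖l + t‖ + ‖-(t:ℂ)‖ := norm_add_le _ _
        _ = ‖l + t‖ + t := by
            rw [norm_neg, Complex.norm_real, Real.norm_eq_abs, abs_of_nonneg ht]
    have hc1 : Real.cos ε ≤ 1 := Real.cos_le_one ε
    have hc2 : -1 ≤ Real.cos ε := Real.neg_one_le_cos ε
    rw [hzre]
    nlinarith [mul_nonneg (by linarith : (0:ℝ) ≤ 1 - Real.cos ε) (by linarith : 0 ≤ t - (‖l+t‖ - ‖l‖)),
      mul_nonneg (by linarith : (0:ℝ) ≤ 1 + Real.cos ε) (by linarith : 0 ≤ t + (‖l+t‖ - ‖l‖))]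


lemma csqrt_log_form {z : ℂ} (hz : z ≠ 0) :
    csqrt z = Complex.exp (Complex.log z * (1/2 : ℂ)) := by
  rw [csqrt, Complex.cpow_def_of_ne_zero hz]

lemma half_re_im : ((1/2 : ℂ)).re = 1/2 ∧ ((1/2 : ℂ)).im = 0 := by
  norm_num

lemma csqrt_abs {z : ℂ} (hz : z ≠ 0) :
    ‖csqrt z‖ = Real.sqrt (‖z‖) := by
  rw [csqrt_log_form hz, Complex.norm_exp]
  have h1 : (Complex.log z * (1/2 : ℂ)).re = Real.log (‖z‖) / 2 := by
    rw [Complex.mul_re, Complex.log_re, half_re_im.1, half_re_im.2]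
    ring
  rw [h1, Real.sqrt_eq_rpow, Real.rpow_def_of_pos (norm_pos_iff.mpr hz)]
  norm_num
  ring

lemma csqrt_re {z : ℂ} (hz : z ≠ 0) :
    (csqrt z).re = Real.sqrt (‖z‖) * Real.cos (z.arg / 2) := by
  rw [csqrt_log_form hz, Complex.exp_re]
  have h1 : (Complex.log z * (1/2 : ℂ)).re = Real.log (‖z‖) / 2 := by
    rw [Complex.mul_re, Complex.log_re, half_re_im.1, half_re_im.2]
    ring
  have h2 : (Complex.log z * (1/2 : ℂ)).im = z.arg / 2 := by
    rw [Complex.mul_im, Complex.log_re, Complex.log_im, half_re_im.1, half_re_im.2]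
    ring
  rw [h1, h2]
  congr 1
  rw [Real.sqrt_eq_rpow, Real.rpow_def_of_pos (norm_pos_iff.mpr hz)]
  congr 1
  ring

lemma csqrt_sq {z : ℂ} (hz : z ≠ 0) : (csqrt z) ^ 2 = z := by
  have h := Complex.cpow_nat_inv_pow z (two_ne_zero)
  rw [csqrt, show (1/2 : ℂ) = (((2:ℕ) : ℂ))⁻¹ by norm_num]
  exact_mod_cast h

/-- `|E(s,y)| ≤ C √|λ| y e^{-δ s y}` on the sector. -/
theorem stmt_9 (ε : ℝ) (hε : ε ∈ Set.Ioo 0 Real.pi) :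
    ∃ C δ : ℝ, 0 < C ∧ 0 < δ ∧ ∀ l ∈ SigmaSector ε, ∀ s y : ℝ, 0 ≤ s → 0 ≤ y →
      ‖Efun l s y‖ ≤
        C * Real.sqrt ‖l‖ * y * Real.exp (-δ * s * y) := by
  obtain ⟨hε0, hεπ⟩ := hε
  have hsin : 0 < Real.sin ε := Real.sin_pos_of_pos_of_lt_pi hε0 hεπ
  have hsin2 : 0 < Real.sin (ε/2) := Real.sin_pos_of_pos_of_lt_pi (by linarith)
    (by linarith [Real.pi_pos])
  have hsqsin : 0 < Real.sqrt (Real.sin ε) := Real.sqrt_pos.2 hsin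
  refine ⟨(Real.sqrt (Real.sin ε))⁻¹, min 1 (Real.sin (ε/2) * Real.sqrt (Real.sin ε)),
    by positivity, lt_min one_pos (by positivity), ?_⟩
  set δ : ℝ := min 1 (Real.sin (ε/2) * Real.sqrt (Real.sin ε)) with hδdef
  rintro l ⟨hl0, harg⟩ s y hs hy
  have habs : 0 < ‖l‖ := norm_pos_iff.mpr hl0
  obtain ⟨ha, hb, hc⟩ := sector_abs_facts hε0 hεπ hl0 harg (s^2) (by positivity)
  simp only [Efun]
  set z : ℂ := l + (s:ℂ)^2 with hzdef
  have hzz : z = l + ((s^2 : ℝ) : ℂ) := by rw [hzdef]; push_cast; ring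
  have hzabs_l : Real.sin ε * ‖l‖ ≤ ‖z‖ := by rw [hzz]; exact ha
  have hzabs_s : Real.sin ε * s^2 ≤ ‖z‖ := by rw [hzz]; exact hb
  have hzre : -Real.cos ε * ‖z‖ ≤ z.re := by rw [hzz]; exact hc
  have hzne : z ≠ 0 := by
    intro h
    rw [h] at hzabs_l
    simp only [norm_zero] at hzabs_l
    nlinarith
  have hzpos : 0 < ‖z‖ := norm_pos_iff.mpr hzne
  -- arg z bound
  have hargz : |z.arg| ≤ Real.pi - ε := by
    by_contra h
    push_neg at h
    have hargpi : |z.arg| ≤ Real.pi :=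
      abs_le.2 ⟨by linarith [Complex.neg_pi_lt_arg z], Complex.arg_le_pi z⟩
    have h1 : Real.cos |z.arg| < Real.cos (Real.pi - ε) :=
      Real.strictAntiOn_cos ⟨by linarith, by linarith⟩ ⟨abs_nonneg _, hargpi⟩ h
    rw [Real.cos_abs, Real.cos_pi_sub, Complex.cos_arg hzne] at h1
    have h2 : z.re < -Real.cos ε * ‖z‖ := by
      rw [div_lt_iff₀ hzpos] at h1
      linarith
    linarith
  have hcoshalf : Real.sin (ε/2) ≤ Real.cos (z.arg / 2) := by
    have h1 : Real.cos ((Real.pi - ε)/2) ≤ Real.cos (|z.arg| / 2) := by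
      apply Real.cos_le_cos_of_nonneg_of_le_pi (by positivity)
        (by linarith [Real.pi_pos]) (by linarith)
    have h2 : Real.cos (|z.arg| / 2) = Real.cos (z.arg / 2) := by
      rw [show |z.arg| / 2 = |z.arg / 2| by rw [abs_div]; norm_num, Real.cos_abs]
    have h3 : Real.cos ((Real.pi - ε)/2) = Real.sin (ε/2) := by
      rw [show (Real.pi - ε)/2 = Real.pi/2 - ε/2 by ring, Real.cos_pi_div_two_sub]
    linarith [h2 ▸ h3 ▸ h1]
  set q : ℂ := csqrt z with hqdef
  have hqabs : ‖q‖ = Real.sqrt (‖z‖) := csqrt_abs hzne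
  have hqre_eq : q.re = Real.sqrt (‖z‖) * Real.cos (z.arg/2) := csqrt_re hzne
  have hqre0 : 0 ≤ q.re := by
    rw [hqre_eq]
    exact mul_nonneg (Real.sqrt_nonneg _) (le_trans hsin2.le hcoshalf)
  have hsqz_s : Real.sqrt (Real.sin ε) * s ≤ Real.sqrt (‖z‖) := by
    have := Real.sqrt_le_sqrt hzabs_s
    rwa [Real.sqrt_mul hsin.le, Real.sqrt_sq hs] at this
  have hqre : Real.sin (ε/2) * Real.sqrt (Real.sin ε) * s ≤ q.re := by
    rw [hqre_eq]
    calc Real.sin (ε/2) * Real.sqrt (Real.sin ε) * s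
        = (Real.sqrt (Real.sin ε) * s) * Real.sin (ε/2) := by ring
      _ ≤ Real.sqrt (‖z‖) * Real.cos (z.arg/2) := by
          apply mul_le_mul hsqz_s hcoshalf hsin2.le (Real.sqrt_nonneg _)
  have hqabs_l : Real.sqrt (Real.sin ε) * Real.sqrt (‖l‖) ≤ ‖q‖ := by
    rw [hqabs, ← Real.sqrt_mul hsin.le]
    exact Real.sqrt_le_sqrt hzabs_l
  have hqsq : q ^ 2 = z := csqrt_sq hzne
  have hfact : (q - s) * (q + s) = l := by
    have h1 : (q - s) * (q + s) = q^2 - (s:ℂ)^2 := by ring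
    rw [h1, hqsq, hzdef]; ring
  have hqs_abs : ‖q‖ ≤ ‖q + s‖ := by
    have e1 : (q + (s:ℂ)).re = q.re + s := by simp
    have e2 : (q + (s:ℂ)).im = q.im := by simp
    have h1 : ‖q‖ ^ 2 ≤ ‖q + s‖ ^ 2 := by
      rw [Complex.sq_norm, Complex.sq_norm, Complex.normSq_apply, Complex.normSq_apply, e1, e2]
      nlinarith [mul_nonneg hqre0 hs]
    have := Real.sqrt_le_sqrt h1
    rwa [Real.sqrt_sq (norm_nonneg _), Real.sqrt_sq (norm_nonneg _)] at this
  have hden : Real.sqrt (Real.sin ε) * Real.sqrt (‖l‖) ≤ ‖q + s‖ :=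
    le_trans hqabs_l hqs_abs
  have hsqrtl : 0 < Real.sqrt (‖l‖) := Real.sqrt_pos.2 habs
  have habs_eq : ‖q - s‖ * ‖q + s‖ = ‖l‖ := by
    rw [← norm_mul, hfact]
  have hdiff : ‖q - s‖ ≤ Real.sqrt (‖l‖) / Real.sqrt (Real.sin ε) := by
    rw [le_div_iff₀ hsqsin]
    apply le_of_mul_le_mul_right _ hsqrtl
    calc ‖q - s‖ * Real.sqrt (Real.sin ε) * Real.sqrt (‖l‖)
        = ‖q - s‖ * (Real.sqrt (Real.sin ε) * Real.sqrt (‖l‖)) := by ring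
      _ ≤ ‖q - s‖ * ‖q + s‖ :=
          mul_le_mul_of_nonneg_left hden (norm_nonneg _)
      _ = ‖l‖ := habs_eq
      _ = Real.sqrt (‖l‖) * Real.sqrt (‖l‖) :=
          (Real.mul_self_sqrt habs.le).symm
  -- exponential bound
  have hE := exp_diff_bound (-(y:ℂ) * s) (-(y:ℂ) * q)
  have hare : (-(y:ℂ) * s).re = -(y*s) := by
    rw [show -(y:ℂ) * s = ((-(y*s) : ℝ) : ℂ) by push_cast; ring, Complex.ofReal_re]
  have hbre : (-(y:ℂ) * q).re = -(y * q.re) := by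
    rw [show -(y:ℂ) * q = ((-y : ℝ) : ℂ) * q by push_cast; ring, Complex.re_ofReal_mul]
    ring
  rw [hare, hbre] at hE
  have habsdiff : ‖(-(y:ℂ) * s) - (-(y:ℂ) * q)‖ = y * ‖q - s‖ := by
    rw [show (-(y:ℂ) * s) - (-(y:ℂ) * q) = (y:ℂ) * (q - s) by ring, norm_mul,
      Complex.norm_real, Real.norm_eq_abs, abs_of_nonneg hy]
  have hδ1 : δ ≤ 1 := min_le_left _ _
  have hδ2 : δ ≤ Real.sin (ε/2) * Real.sqrt (Real.sin ε) := min_le_right _ _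
  have hmax : max (Real.exp (-(y*s))) (Real.exp (-(y * q.re))) ≤ Real.exp (-δ * s * y) := by
    apply max_le
    · apply Real.exp_le_exp.2
      have h1 : δ * (s * y) ≤ 1 * (s * y) :=
        mul_le_mul_of_nonneg_right hδ1 (mul_nonneg hs hy)
      linarith [h1]
    · apply Real.exp_le_exp.2
      have h2 : δ * s ≤ q.re :=
        le_trans (mul_le_mul_of_nonneg_right hδ2 hs) hqre
      linarith [mul_le_mul_of_nonneg_right h2 hy]
  calc ‖Complex.exp (-(y:ℂ) * s) - Complex.exp (-(y:ℂ) * q)‖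
      ≤ ‖(-(y:ℂ) * s) - (-(y:ℂ) * q)‖ *
          max (Real.exp (-(y*s))) (Real.exp (-(y * q.re))) := hE
    _ = (y * ‖q - s‖) * max (Real.exp (-(y*s))) (Real.exp (-(y * q.re))) := by
        rw [habsdiff]
    _ ≤ (y * (Real.sqrt (‖l‖) / Real.sqrt (Real.sin ε))) * Real.exp (-δ * s * y) := by
        apply mul_le_mul (mul_le_mul_of_nonneg_left hdiff hy) hmax
          (le_max_iff.2 (Or.inl (Real.exp_pos _).le)) (by positivity)
    _ = (Real.sqrt (Real.sin ε))⁻¹ * Real.sqrt (‖l‖) * y * Real.exp (-δ * s * y) := by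
        field_simp
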